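/- Descartes' rule of signs, weak form: a real polynomial whose nonzero coefficients, listed by descending exponent, have exactly one sign change has at least one positive real root. -/

import Mathlib

open Polynomial Filter

/-- Number of sign changes between consecutive entries of a list of reals. -/
noncomputable def signChanges (l : List ℝ) : ℕ :=
  ((l.zip l.tail).filter (fun q => q.1 * q.2 < 0)).length

lemma signChanges_cons_cons (a b : ℝ) (t : List ℝ) :
    signChanges (a :: b :: t) =
      (if a * b < 0 then 1 else 0) + signChanges (b :: t) := by
  simp only [signChanges, List.zip, List.tail, List.zipWith]
  by_cases h : a * b < 0 <;> simp [List.filter_cons, h, Nat.add_comm]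

lemma odd_signChanges : ∀ (t : List ℝ) (a : ℝ), a ≠ 0 → (∀ x ∈ t, x ≠ 0) →
    (Odd (signChanges (a :: t)) ↔ a * (a :: t).getLast (by simp) < 0) := by
  intro t
  induction t with
  | nil => intro a ha _; simp [signChanges]; nlinarith [mul_self_nonneg a]
  | cons b t ih =>
    intro a ha h
    have hb : b ≠ 0 := h b (by simp)
    have ht : ∀ x ∈ t, x ≠ 0 := fun x hx => h x (by simp [hx])
    have hlast : ((a :: b :: t).getLast (by simp)) = (b :: t).getLast (by simp) := by
      simp [List.getLast]
    rw [hlast, signChanges_cons_cons]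
    have hL := ih b hb ht
    set L := (b :: t).getLast (by simp) with hLdef
    have hLne : L ≠ 0 := h _ (hLdef ▸ List.getLast_mem (by simp))
    have hbb : 0 < b * b := mul_self_pos.mpr hb
    have key : ∀ s : ℕ, Odd (1 + s) ↔ ¬ Odd s := by
      intro s; rw [Nat.add_comm, Nat.odd_add_one, Nat.not_odd_iff_even]
    by_cases hab : a * b < 0
    · simp only [hab, if_true, key, hL]
      constructor
      · intro hc
        have hbL : 0 < b * L := lt_of_le_of_ne (not_lt.1 hc) (by
          intro hz; exact hLne (by rcases mul_eq_zero.1 hz.symm with h1 | h1; exact absurd h1 hb; exact h1))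
        nlinarith [mul_neg_of_neg_of_pos hab hbL, hbb]
      · intro hc hbL
        nlinarith [mul_pos_of_neg_of_neg hab hbL, hbb, hc]
    · have hab2 : 0 < a * b := lt_of_le_of_ne (not_lt.1 hab) (Ne.symm (mul_ne_zero ha hb))
      simp only [hab, if_false, Nat.zero_add, hL]
      constructor
      · intro hbL
        nlinarith [mul_neg_of_pos_of_neg hab2 hbL, hbb]
      · intro hc
        by_contra hbL
        have hbL2 : 0 ≤ b * L := not_lt.1 hbL
        nlinarith [mul_nonneg (le_of_lt hab2) hbL2, hbb, hc]

lemma exists_pos_root_aux (q : Polynomial ℝ) (hlc : 0 < q.leadingCoeff)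
    (h0 : q.eval 0 < 0) : ∃ x : ℝ, 0 < x ∧ q.eval x = 0 := by
  have hq : q ≠ 0 := fun h => by simp [h] at hlc
  have hnd : q.natDegree ≠ 0 := by
    intro h
    have : q.leadingCoeff = q.eval 0 := by
      rw [Polynomial.leadingCoeff, h, Polynomial.coeff_zero_eq_eval_zero]
    linarith [this ▸ hlc]
  have hdeg : 0 < q.degree := Polynomial.natDegree_pos_iff_degree_pos.mp (Nat.pos_of_ne_zero hnd)
  have htend := Polynomial.tendsto_atTop_of_leadingCoeff_nonneg q hdeg hlc.le
  obtain ⟨b, hb1, hb0⟩ := ((htend.eventually_ge_atTop 1).and (eventually_ge_atTop 0)).exists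
  have hbpos : 0 < b := lt_of_le_of_ne hb0 (fun h => by rw [← h] at hb1; linarith)
  have hsub := intermediate_value_Ioo hbpos.le
    (f := fun x => q.eval x) (Continuous.continuousOn q.continuous)
  have h0mem : (0:ℝ) ∈ Set.Ioo (q.eval 0) (q.eval b) := ⟨h0, by linarith⟩
  obtain ⟨x, hx, hfx⟩ := hsub h0mem
  exact ⟨x, hx.1, hfx⟩

/-- Descartes' rule of signs, weak form: a real polynomial whose nonzero
coefficients, listed by descending exponent, have exactly one sign change
has at least one positive real root. -/
theorem descartes_one_sign_change_pos_root
    (p : Polynomial ℝ) (hp : p ≠ 0)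
    (hsign : signChanges
        ((((List.range (p.natDegree + 1)).reverse.map p.coeff).filter
          (fun c => c ≠ 0))) = 1) :
    ∃ x : ℝ, 0 < x ∧ p.eval x = 0 := by
  set n := p.natDegree with hn
  set m := p.natTrailingDegree with hm
  have hmn : m ≤ n := p.natTrailingDegree_le_natDegree
  have hcn : p.coeff n ≠ 0 := fun h => hp (Polynomial.leadingCoeff_eq_zero.mp h)
  have hcm : p.coeff m ≠ 0 := Polynomial.trailingCoeff_nonzero_iff_nonzero.mpr hp
  set M : List ℝ := (((List.range (n + 1)).reverse.map p.coeff).filter (fun c => c ≠ 0)) with hM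
  set A : List ℝ := (((List.range (n + 1)).map p.coeff).filter (fun c => c ≠ 0)) with hA
  have hMA : M = A.reverse := by
    rw [hM, hA, ← List.filter_reverse, List.map_reverse]
  -- head? of M is the leading coefficient
  have hAlast : A.getLast? = some (p.coeff n) := by
    rw [hA, List.range_succ, List.map_append, List.filter_append]
    simp [hcn]
  have hAhead : A.head? = some (p.coeff m) := by
    have hsplit : n + 1 = m + (n + 1 - m) := by omega
    have hpos : ∃ k, n + 1 - m = k + 1 := ⟨n - m, by omega⟩
    obtain ⟨k, hk⟩ := hpos
    rw [hA, hsplit, List.range_add, List.map_append, List.filter_append]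
    have h1 : (((List.range m).map p.coeff).filter (fun c => decide (c ≠ 0))) = [] := by
      rw [List.filter_eq_nil_iff]
      intro a ha
      simp only [List.mem_map, List.mem_range] at ha
      obtain ⟨i, hi, rfl⟩ := ha
      simp [Polynomial.coeff_eq_zero_of_lt_natTrailingDegree hi]
    rw [h1, List.nil_append, hk, List.range_succ_eq_map]
    simp [List.filter_cons, hcm]
  have hMhead : M.head? = some (p.coeff n) := by
    rw [hMA, List.head?_reverse, hAlast]
  have hMlast : M.getLast? = some (p.coeff m) := by
    rw [hMA, List.getLast?_reverse, hAhead]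
  -- M is a nonempty list of nonzero reals
  have hMnz : ∀ x ∈ M, x ≠ 0 := by
    intro x hx
    rw [hM, List.mem_filter] at hx
    simpa using hx.2
  obtain ⟨a, t, hcons⟩ : ∃ a t, M = a :: t := by
    cases hMeq : M with
    | nil => rw [hMeq] at hMhead; simp at hMhead
    | cons a t => exact ⟨a, t, rfl⟩
  have ha : a ≠ 0 := hMnz a (by rw [hcons]; simp)
  have ht : ∀ x ∈ t, x ≠ 0 := fun x hx => hMnz x (by rw [hcons]; simp [hx])
  have hodd : Odd (signChanges (a :: t)) := by
    rw [← hcons]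
    rw [hsign]; exact odd_one
  have hprod := (odd_signChanges t a ha ht).mp hodd
  -- identify head and last
  have h1 : a = p.coeff n := by
    rw [hcons] at hMhead; simpa using hMhead
  have h2 : (a :: t).getLast (by simp) = p.coeff m := by
    have h3 := List.getLast?_eq_getLast (l := a :: t) (by simp)
    rw [hcons] at hMlast
    exact Option.some_injective _ (h3.symm.trans hMlast)
  rw [h2, h1] at hprod
  -- factor out X ^ m
  obtain ⟨q, hq⟩ : X ^ m ∣ p := Polynomial.X_pow_dvd_iff.mpr
    (fun d hd => Polynomial.coeff_eq_zero_of_lt_natTrailingDegree hd)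
  have hq0 : q ≠ 0 := fun h => hp (by rw [hq, h, mul_zero])
  have hlead : p.coeff n = q.leadingCoeff := by
    rw [hn]
    show p.leadingCoeff = q.leadingCoeff
    rw [hq, Polynomial.leadingCoeff_mul, Polynomial.leadingCoeff_X_pow, one_mul]
  have htrail : p.coeff m = q.eval 0 := by
    have := Polynomial.coeff_X_pow_mul q m 0
    rw [zero_add] at this
    rw [hq, this, Polynomial.coeff_zero_eq_eval_zero]
  rw [hlead, htrail] at hprod
  have key : ∃ x : ℝ, 0 < x ∧ q.eval x = 0 := by
    rcases lt_or_gt_of_ne (Polynomial.leadingCoeff_ne_zero.mpr hq0) with hneg | hpos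
    · have h0 : 0 < q.eval 0 := by nlinarith
      obtain ⟨x, hx, hex⟩ := exists_pos_root_aux (-q) (by simpa using hneg) (by simpa using h0)
      exact ⟨x, hx, by simpa using hex⟩
    · have h0 : q.eval 0 < 0 := by nlinarith
      exact exists_pos_root_aux q hpos h0
  obtain ⟨x, hx, hex⟩ := key
  exact ⟨x, hx, by rw [hq]; simp [hex]⟩
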